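/- Let c > 0, s > 1, and y_n = e^{c n/(log n)^s}. Then lim_{n→∞} (y_n/log² y_n) / (y_{n+1}/log y_{n+1} − y_n/log y_n) = 0 and lim_{n→∞} (y_{n+1}/log² y_{n+1}) / (y_{n+1}/log y_{n+1} − y_n/log y_n) = 0. -/

import Mathlib

open Real Filter

-- exp t ≤ 1 + 2t for 0 ≤ t ≤ 1/2
lemma exp_le_one_add_two_mul {t : ℝ} (h0 : 0 ≤ t) (h1 : t ≤ 1/2) :
    Real.exp t ≤ 1 + 2*t := by
  have h := Real.add_one_le_exp (-t)
  have h2 : Real.exp (-t) * Real.exp t = 1 := by rw [← Real.exp_add]; simp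
  nlinarith [Real.exp_pos t, Real.exp_pos (-t)]

-- tendsto log x ^ r / x → 0
lemma log_rpow_div_tendsto (r : ℝ) :
    Tendsto (fun x : ℝ => Real.log x ^ r / x) atTop (nhds 0) := by
  have h := (isLittleO_log_rpow_rpow_atTop r one_pos).tendsto_div_nhds_zero
  refine h.congr' ?_
  filter_upwards [eventually_gt_atTop (0:ℝ)] with x hx
  rw [Real.rpow_one]

-- c*x/log x^s → ∞
lemma a_tendsto (c s : ℝ) (hc : 0 < c) (hs : 0 < s) :
    Tendsto (fun x : ℝ => c * x / Real.log x ^ s) atTop atTop := by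
  have hsmall : Tendsto (fun x : ℝ => Real.log x ^ s / x) atTop (nhds 0) :=
    log_rpow_div_tendsto s
  have hpos : ∀ᶠ x : ℝ in atTop, Real.log x ^ s / x ∈ Set.Ioi (0:ℝ) := by
    filter_upwards [eventually_gt_atTop (1:ℝ)] with x hx
    have hl : 0 < Real.log x := Real.log_pos hx
    exact div_pos (Real.rpow_pos_of_pos hl s) (lt_trans one_pos hx)
  have h2 : Tendsto (fun x : ℝ => Real.log x ^ s / x) atTop (nhdsWithin 0 (Set.Ioi 0)) :=
    tendsto_nhdsWithin_of_tendsto_nhds_of_eventually_within _ hsmall hpos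
  have h3 := h2.inv_tendsto_nhdsGT_zero
  have h4 : Tendsto (fun x : ℝ => x / Real.log x ^ s) atTop atTop := by
    refine h3.congr fun x => ?_
    simp [Pi.inv_apply, inv_div]
  have := h4.const_mul_atTop hc
  refine this.congr fun x => ?_
  ring

set_option maxHeartbeats 2000000 in
lemma key (c s x a a' L L' : ℝ) (hc : 0 < c) (hs : 1 < s) (hx2 : 2 ≤ x)
    (hL : 4*s ≤ L) (hLL' : L ≤ L') (hdiff : L' - L ≤ 1/x)
    (ha : a = c*x/L^s) (ha' : a' = c*(x+1)/L'^s)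
    (ha2 : 2 ≤ a) (hd1 : c / L'^s ≤ 1) :
    0 < Real.exp a'/a' - Real.exp a/a ∧
    (Real.exp a/a^2)/(Real.exp a'/a' - Real.exp a/a)
      ≤ 4*(x+1)*(L^s)^2/(c^2*x^2) ∧
    (Real.exp a'/a'^2)/(Real.exp a'/a' - Real.exp a/a)
      ≤ 4*Real.exp 1*(L'^s)^2/(c^2*(x+1)) := by
  have hs0 : (0:ℝ) < s := lt_trans one_pos hs
  have hx0 : (0:ℝ) < x := lt_of_lt_of_le two_pos hx2
  have hL0 : 0 < L := by nlinarith
  have hL'0 : 0 < L' := lt_of_lt_of_le hL0 hLL'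
  have hLs : 0 < L^s := Real.rpow_pos_of_pos hL0 s
  have hL's : 0 < L'^s := Real.rpow_pos_of_pos hL'0 s
  have ha0 : 0 < a := lt_of_lt_of_le two_pos ha2
  have hratio : (0:ℝ) < L'/L := div_pos hL'0 hL0
  have hlog1 : Real.log (L'/L) ≤ 1/(x*L) := by
    have h1 : Real.log (L'/L) ≤ L'/L - 1 := Real.log_le_sub_one_of_pos hratio
    have h6 : L'/L - 1 = (L' - L)/L := by field_simp
    calc Real.log (L'/L) ≤ (L' - L)/L := by rw [← h6]; exact h1
      _ ≤ (1/x)/L := by gcongr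
      _ = 1/(x*L) := by rw [div_div]
  have hlog0 : 0 ≤ Real.log (L'/L) := Real.log_nonneg ((one_le_div hL0).mpr hLL')
  set t := Real.log (L'/L) * s with htdef
  have ht0 : 0 ≤ t := mul_nonneg hlog0 hs0.le
  have htle : t ≤ 1/(4*x) := by
    have h1 : Real.log (L'/L) * s ≤ (1/(x*L)) * s := by gcongr
    have h2 : (1/(x*L)) * s ≤ 1/(4*x) := by
      rw [div_mul_eq_mul_div, div_le_div_iff₀ (by positivity) (by positivity)]
      nlinarith
    linarith
  have ht12 : t ≤ 1/2 := by
    have : 1/(4*x) ≤ 1/2 := by rw [div_le_div_iff₀ (by positivity) (by norm_num)]; linarith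
    linarith
  have hq : (L'/L)^s = Real.exp t := Real.rpow_def_of_pos hratio s
  have hexp : Real.exp t ≤ 1 + 2*t := exp_le_one_add_two_mul ht0 ht12
  have hxt : x * t ≤ 1/4 := by
    have h1 : x * t ≤ x * (1/(4*x)) := by gcongr
    have h2 : x * (1/(4*x)) = 1/4 := by field_simp
    linarith
  have hkey : x * ((L'/L)^s) ≤ x + 1/2 := by
    rw [hq]
    nlinarith [mul_le_mul_of_nonneg_left hexp hx0.le]
  have hdiv : (L'/L)^s = L'^s/L^s := Real.div_rpow hL'0.le hL0.le s
  have hxL : x / L^s = x * ((L'/L)^s) / L'^s := by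
    rw [hdiv]; field_simp
  have hdlow : c/(2*L'^s) ≤ a' - a := by
    have hx3 : c * x / L ^ s = c * ((x * ((L'/L)^s)) / L'^s) := by
      rw [show c * x / L^s = c * (x / L^s) by ring, hxL]
    have heq : c*(x+1)/L'^s - c * ((x * ((L'/L)^s)) / L'^s)
        = c*((x+1) - x*((L'/L)^s))/L'^s := by ring
    rw [ha, ha', hx3, heq]
    rw [div_le_div_iff₀ (by positivity) hL's]
    nlinarith [mul_nonneg (mul_nonneg hc.le
      (by linarith : (0:ℝ) ≤ (x+1) - x*((L'/L)^s) - 1/2)) hL's.le]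
  have hdup : a' - a ≤ c/L'^s := by
    have h1 : x/L'^s ≤ x/L^s := by gcongr
    have h1' : c*x/L'^s ≤ c*x/L^s := by
      rw [mul_div_assoc, mul_div_assoc]
      exact mul_le_mul_of_nonneg_left h1 hc.le
    have h2 : c*(x+1)/L'^s - c*x/L'^s = c/L'^s := by ring
    rw [ha, ha']
    linarith
  have hd0 : 0 < a' - a := lt_of_lt_of_le (by positivity) hdlow
  have hd1' : a' - a ≤ 1 := le_trans hdup hd1
  have ha'0 : 0 < a' := by linarith
  have e1 : Real.exp a'/a' - Real.exp a/a
      = Real.exp a * (Real.exp (a'-a) / a' - 1/a) := by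
    rw [show a' = a + (a'-a) by ring, Real.exp_add]
    ring_nf
  have e2 : (1+(a'-a))/a' - 1/a ≤ Real.exp (a'-a) / a' - 1/a := by
    gcongr
    linarith [Real.add_one_le_exp (a'-a)]
  have e3 : (1+(a'-a))/a' - 1/a = (a'-a)*(a-1)/(a*a') := by
    field_simp
    ring
  have e4 : (a'-a)/(2*a') ≤ (a'-a)*(a-1)/(a*a') := by
    have q1 : (a'-a)*(a-1)/(a*a') = ((a'-a)/a')*((a-1)/a) := by
      rw [div_mul_div_comm]; ring_nf
    have q2 : (a'-a)/(2*a') = ((a'-a)/a')*(1/2) := by ring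
    rw [q1, q2]
    have q3 : (1:ℝ)/2 ≤ (a-1)/a := by
      rw [le_div_iff₀ ha0]; linarith
    have q4 : 0 ≤ (a'-a)/a' := by positivity
    exact mul_le_mul_of_nonneg_left q3 q4
  have hDlow : Real.exp a * ((a'-a)/(2*a')) ≤ Real.exp a'/a' - Real.exp a/a := by
    rw [e1]
    have h5 : (a'-a)/(2*a') ≤ Real.exp (a'-a)/a' - 1/a := by
      calc (a'-a)/(2*a') ≤ (a'-a)*(a-1)/(a*a') := e4
        _ = (1+(a'-a))/a' - 1/a := e3.symm
        _ ≤ _ := e2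
    gcongr
  have hD : 0 < Real.exp a'/a' - Real.exp a/a :=
    lt_of_lt_of_le (by positivity) hDlow
  refine ⟨hD, ?_, ?_⟩
  · calc (Real.exp a/a^2)/(Real.exp a'/a' - Real.exp a/a)
        ≤ (Real.exp a/a^2)/(Real.exp a * ((a'-a)/(2*a'))) := by gcongr
      _ = 2*a'/(a^2*(a'-a)) := by
          rw [div_eq_div_iff (by positivity) (by positivity)]
          field_simp [(Real.exp_pos a).ne']
      _ ≤ 2*a'/(a^2*(c/(2*L'^s))) := by
          rw [div_le_div_iff_of_pos_left (by positivity) (by positivity) (by positivity)]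
          gcongr
      _ = 4*(x+1)*(L^s)^2/(c^2*x^2) := by
          rw [ha, ha']
          rw [div_eq_div_iff (by positivity) (by positivity)]
          field_simp
          ring
  · have hnum : Real.exp a' ≤ Real.exp a * Real.exp 1 := by
      rw [← Real.exp_add]
      exact Real.exp_le_exp.mpr (by linarith)
    calc (Real.exp a'/a'^2)/(Real.exp a'/a' - Real.exp a/a)
        ≤ (Real.exp a * Real.exp 1/a'^2)/(Real.exp a * ((a'-a)/(2*a'))) := by
          gcongr
      _ = 2*Real.exp 1/(a'*(a'-a)) := by
          rw [div_eq_div_iff (by positivity) (by positivity)]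
          field_simp [(Real.exp_pos a).ne']
      _ ≤ 2*Real.exp 1/(a'*(c/(2*L'^s))) := by
          rw [div_le_div_iff_of_pos_left (by positivity) (by positivity) (by positivity)]
          gcongr
      _ = 4*Real.exp 1*(L'^s)^2/(c^2*(x+1)) := by
          rw [ha']
          rw [div_eq_div_iff (by positivity) (by positivity)]
          field_simp
          ring


theorem stmt6 (c s : ℝ) (hc : 0 < c) (hs : 1 < s) :
    (Tendsto
      (fun n : ℕ =>
        (Real.exp (c * n / Real.log n ^ s) / Real.log (Real.exp (c * n / Real.log n ^ s)) ^ 2)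
        / (Real.exp (c * (n + 1) / Real.log (n + 1) ^ s)
              / Real.log (Real.exp (c * (n + 1) / Real.log (n + 1) ^ s))
            - Real.exp (c * n / Real.log n ^ s)
              / Real.log (Real.exp (c * n / Real.log n ^ s))))
      atTop (nhds 0)) ∧
    (Tendsto
      (fun n : ℕ =>
        (Real.exp (c * (n + 1) / Real.log (n + 1) ^ s)
            / Real.log (Real.exp (c * (n + 1) / Real.log (n + 1) ^ s)) ^ 2)
        / (Real.exp (c * (n + 1) / Real.log (n + 1) ^ s)
              / Real.log (Real.exp (c * (n + 1) / Real.log (n + 1) ^ s))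
            - Real.exp (c * n / Real.log n ^ s)
              / Real.log (Real.exp (c * n / Real.log n ^ s))))
      atTop (nhds 0)) := by
  simp only [Real.log_exp]
  have hs0 : (0:ℝ) < s := lt_trans one_pos hs
  have hcast : Tendsto (fun n : ℕ => (n:ℝ)) atTop atTop := tendsto_natCast_atTop_atTop
  have hcast1 : Tendsto (fun n : ℕ => (n:ℝ)+1) atTop atTop :=
    tendsto_atTop_add_const_right _ 1 hcast
  -- eventual hypotheses of `key`
  have hlogT : Tendsto (fun n : ℕ => Real.log n) atTop atTop :=
    Real.tendsto_log_atTop.comp hcast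
  have hlog1T : Tendsto (fun n : ℕ => Real.log ((n:ℝ)+1)) atTop atTop :=
    Real.tendsto_log_atTop.comp hcast1
  have haT : Tendsto (fun n : ℕ => c * n / Real.log n ^ s) atTop atTop :=
    (a_tendsto c s hc hs0).comp hcast
  have hL'sT : Tendsto (fun n : ℕ => Real.log ((n:ℝ)+1) ^ s) atTop atTop :=
    (tendsto_rpow_atTop hs0).comp hlog1T
  have hEv : ∀ᶠ n : ℕ in atTop,
      0 < Real.exp (c*((n:ℝ)+1)/Real.log ((n:ℝ)+1)^s)/(c*((n:ℝ)+1)/Real.log ((n:ℝ)+1)^s)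
          - Real.exp (c*(n:ℝ)/Real.log (n:ℝ)^s)/(c*(n:ℝ)/Real.log (n:ℝ)^s) ∧
      (Real.exp (c*(n:ℝ)/Real.log (n:ℝ)^s)/(c*(n:ℝ)/Real.log (n:ℝ)^s)^2)
        / (Real.exp (c*((n:ℝ)+1)/Real.log ((n:ℝ)+1)^s)/(c*((n:ℝ)+1)/Real.log ((n:ℝ)+1)^s)
          - Real.exp (c*(n:ℝ)/Real.log (n:ℝ)^s)/(c*(n:ℝ)/Real.log (n:ℝ)^s))
        ≤ 4*((n:ℝ)+1)*(Real.log (n:ℝ)^s)^2/(c^2*(n:ℝ)^2) ∧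
      (Real.exp (c*((n:ℝ)+1)/Real.log ((n:ℝ)+1)^s)/(c*((n:ℝ)+1)/Real.log ((n:ℝ)+1)^s)^2)
        / (Real.exp (c*((n:ℝ)+1)/Real.log ((n:ℝ)+1)^s)/(c*((n:ℝ)+1)/Real.log ((n:ℝ)+1)^s)
          - Real.exp (c*(n:ℝ)/Real.log (n:ℝ)^s)/(c*(n:ℝ)/Real.log (n:ℝ)^s))
        ≤ 4*Real.exp 1*(Real.log ((n:ℝ)+1)^s)^2/(c^2*((n:ℝ)+1)) := by
    filter_upwards [eventually_ge_atTop 2, hlogT.eventually_ge_atTop (4*s),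
      haT.eventually_ge_atTop 2, hL'sT.eventually_ge_atTop c] with n hn2 hL ha2 hcs
    have hx2 : (2:ℝ) ≤ (n:ℝ) := by exact_mod_cast hn2
    have hx0 : (0:ℝ) < (n:ℝ) := by linarith
    have hLL' : Real.log (n:ℝ) ≤ Real.log ((n:ℝ)+1) :=
      Real.log_le_log hx0 (by linarith)
    have hdiff : Real.log ((n:ℝ)+1) - Real.log (n:ℝ) ≤ 1/(n:ℝ) := by
      have h3 : Real.log ((n:ℝ)+1) - Real.log (n:ℝ) = Real.log (((n:ℝ)+1)/(n:ℝ)) :=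
        (Real.log_div (by linarith) hx0.ne').symm
      have h4 : Real.log (((n:ℝ)+1)/(n:ℝ)) ≤ ((n:ℝ)+1)/(n:ℝ) - 1 :=
        Real.log_le_sub_one_of_pos (div_pos (by linarith) hx0)
      have h5 : ((n:ℝ)+1)/(n:ℝ) - 1 = 1/(n:ℝ) := by field_simp; ring
      rw [h3]; rw [h5] at h4; exact h4
    have hd1 : c / Real.log ((n:ℝ)+1)^s ≤ 1 := by
      have hp : 0 < Real.log ((n:ℝ)+1)^s := lt_of_lt_of_le hc hcs
      rw [div_le_one hp]; exact hcs
    exact key c s (n:ℝ) _ _ _ _ hc hs hx2 hL hLL' hdiff rfl rfl ha2 hd1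
  have hU1 : Tendsto (fun n : ℕ => 4*((n:ℝ)+1)*(Real.log n^s)^2/(c^2*(n:ℝ)^2))
      atTop (nhds 0) := by
    have h1 : Tendsto (fun n : ℕ => Real.log n ^ (s*2) / (n:ℝ)) atTop (nhds 0) :=
      (log_rpow_div_tendsto (s*2)).comp hcast
    have h2 : Tendsto (fun n : ℕ => ((n:ℝ)+1)/(n:ℝ)) atTop (nhds 1) := by
      have := (tendsto_const_nhds (α := ℕ) (f := atTop) (x := (1:ℝ))).add
        tendsto_one_div_atTop_nhds_zero_nat
      rw [add_zero] at this
      refine this.congr' ?_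
      filter_upwards [eventually_ge_atTop 1] with n hn
      have : (0:ℝ) < n := by exact_mod_cast Nat.pos_of_ne_zero (by omega)
      field_simp
    have h3 := ((h1.mul h2).const_mul (4/c^2))
    rw [zero_mul, mul_zero] at h3
    refine h3.congr' ?_
    filter_upwards [eventually_ge_atTop 2] with n hn
    have hn0 : (0:ℝ) < n := by exact_mod_cast Nat.pos_of_ne_zero (by omega)
    have hln : 0 ≤ Real.log n := Real.log_nonneg (by exact_mod_cast Nat.one_le_cast.mpr (by omega))
    have hsq : (Real.log n ^ s)^2 = Real.log n ^ (s*2) := by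
      rw [← Real.rpow_natCast (Real.log (n:ℝ) ^ s) 2, ← Real.rpow_mul hln]
      norm_num
    rw [← hsq]
    field_simp
  have hU2 : Tendsto (fun n : ℕ => 4*Real.exp 1*(Real.log ((n:ℝ)+1)^s)^2/(c^2*((n:ℝ)+1)))
      atTop (nhds 0) := by
    have h4 : Tendsto (fun n : ℕ => Real.log ((n:ℝ)+1) ^ (s*2) / ((n:ℝ)+1)) atTop (nhds 0) :=
      (log_rpow_div_tendsto (s*2)).comp hcast1
    have h5 := h4.const_mul (4*Real.exp 1/c^2)
    rw [mul_zero] at h5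
    refine h5.congr' ?_
    filter_upwards [eventually_ge_atTop 1] with n hn
    have hn1 : (1:ℝ) ≤ (n:ℝ)+1 := by linarith [show (0:ℝ) ≤ n from Nat.cast_nonneg n]
    have hln : 0 ≤ Real.log ((n:ℝ)+1) := Real.log_nonneg hn1
    have hsq : (Real.log ((n:ℝ)+1) ^ s)^2 = Real.log ((n:ℝ)+1) ^ (s*2) := by
      rw [← Real.rpow_natCast (Real.log ((n:ℝ)+1) ^ s) 2, ← Real.rpow_mul hln]
      norm_num
    rw [← hsq]
    have : (0:ℝ) < (n:ℝ)+1 := by positivity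
    field_simp
  constructor
  · refine squeeze_zero' ?_ ?_ hU1
    · filter_upwards [hEv] with n h
      exact div_nonneg (by positivity) h.1.le
    · filter_upwards [hEv] with n h
      exact h.2.1
  · refine squeeze_zero' ?_ ?_ hU2
    · filter_upwards [hEv] with n h
      exact div_nonneg (by positivity) h.1.le
    · filter_upwards [hEv] with n h
      exact h.2.2
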